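/- The Harmony mechanism satisfies ε-local differential privacy: for any v1, v2 ∈ [−1,1] and any output o ∈ {−(e^ε+1)/(e^ε−1), (e^ε+1)/(e^ε−1)}, Pr[Harmony(v1)=o] ≤ e^ε · Pr[Harmony(v2)=o]. -/

import Mathlib

open Real

/-- Output distribution of the Harmony mechanism: on input `v`, output
`(e^ε+1)/(e^ε−1)` (encoded `true`) with probability
`((1+v)/2)·(e^ε/(e^ε+1)) + ((1−v)/2)·(1/(e^ε+1))`, and `−(e^ε+1)/(e^ε−1)`
(encoded `false`) with the complementary probability. -/
noncomputable def harmonyProb (ε v : ℝ) (o : Bool) : ℝ :=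
  let q := (1 + v) / 2 * (exp ε / (exp ε + 1)) + (1 - v) / 2 * (1 / (exp ε + 1))
  if o then q else 1 - q

/-- The Harmony mechanism satisfies ε-local differential privacy. -/
theorem harmony_ldp (ε : ℝ) (hε : 0 < ε) (v1 v2 : ℝ)
    (hv1 : v1 ∈ Set.Icc (-1 : ℝ) 1) (hv2 : v2 ∈ Set.Icc (-1 : ℝ) 1) (o : Bool) :
    harmonyProb ε v1 o ≤ exp ε * harmonyProb ε v2 o := by
  obtain ⟨h1, h2⟩ := hv1
  obtain ⟨h3, h4⟩ := hv2
  have hE : 1 < exp ε := by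
    rw [← Real.exp_zero]; exact Real.exp_lt_exp.mpr hε
  have hpos : (0:ℝ) < exp ε + 1 := by linarith
  simp only [harmonyProb]
  have hA : 0 ≤ (1 - v1) * (exp ε - 1) * (exp ε + 1) :=
    mul_nonneg (mul_nonneg (by linarith) (by linarith)) hpos.le
  have hB : 0 ≤ (1 + v2) * (exp ε - 1) * (exp ε + 1) :=
    mul_nonneg (mul_nonneg (by linarith) (by linarith)) hpos.le
  have hC : 0 ≤ (1 + v1) * (exp ε - 1) * (exp ε + 1) :=
    mul_nonneg (mul_nonneg (by linarith) (by linarith)) hpos.le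
  have hD : 0 ≤ (1 - v2) * (exp ε - 1) * (exp ε + 1) :=
    mul_nonneg (mul_nonneg (by linarith) (by linarith)) hpos.le
  cases o <;>
    · simp only [harmonyProb, if_true, if_false, Bool.false_eq_true]
      field_simp
      nlinarith [hA, hB, hC, hD, mul_pos (sub_pos.mpr hE) hpos]
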